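/- Assume Î ≠ ∅ and that for every i ∈ Î the number ε_i > 0 satisfies d + ε_i ≤ x_i^max and (w_i + c_i(y))/y > ∂₊c_i(y) for all y ∈ (0, d + ε_i]. Then every p ∈ P̄⁺(ε) satisfies p ≤ min over i ∈ Î of (w_i + c_i(d + ε_i))/(d + ε_i), and consequently π̂_i(p, ε_i) = 0 for every i ∈ Î and every p ∈ P̄⁺(ε): no LNMGU has positive profit in the dual problem. -/

import Mathlib

noncomputable section

/-- Feasible set of a single generator with capacity `xmax`. -/
def Gen (xmax : ℝ) : Set (ℝ × ℝ) :=
  {ux | (ux.1 = 0 ∨ ux.1 = 1) ∧ 0 ≤ ux.2 ∧ ux.2 ≤ ux.1 * xmax}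

/-- Cost of a generator. -/
def Cost (w : ℝ) (c : ℝ → ℝ) (ux : ℝ × ℝ) : ℝ := w * ux.1 + c ux.2

/-- Upper bound `x^c,max` of possible output volumes of generator `i`. -/
def xcmax (n : ℕ) (xmax : Fin n → ℝ) (d : ℝ) (i : Fin n) : ℝ :=
  min d (xmax i)

/-- The relaxed modified feasible set `Ĝ_i(ε)`. -/
def Ghat (xmax xcmax ε : ℝ) : Set (ℝ × ℝ) :=
  {ux ∈ Gen xmax | ux.2 ≤ xcmax + ε}

/-- If `Î ≠ ∅` and each `ε_i > 0` (for `i ∈ Î`) satisfies `d + ε_i ≤ xmax i` and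
`(w_i + c_i y)/y > ∂₊c_i(y)` on `(0, d + ε_i]`, then every `p ∈ P̄⁺(ε)` satisfies
`p ≤ min_{i ∈ Î} (w_i + c_i(d+ε_i))/(d+ε_i)`, and consequently `π̂_i(p,ε_i) = 0` for all
`i ∈ Î`: no LNMGU has positive profit in the dual problem. -/
theorem stmt_16 (n : ℕ) (d : ℝ) (hd : 0 < d)
    (w xmax : Fin n → ℝ) (c : Fin n → ℝ → ℝ)
    (hxmax : ∀ i, 0 < xmax i) (hw : ∀ i, 0 ≤ w i)
    (hconv : ∀ i, ConvexOn ℝ (Set.Icc 0 (xmax i)) (c i))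
    (hmono : ∀ i, MonotoneOn (c i) (Set.Icc 0 (xmax i)))
    (hcont : ∀ i, ContinuousOn (c i) (Set.Icc 0 (xmax i)))
    (hc0 : ∀ i, c i 0 = 0)
    (hfeas : d ≤ ∑ i, xmax i)
    (dp : Fin n → ℝ → ℝ)
    (hdp : ∀ i, ∀ y, 0 < y → y < xmax i →
      HasDerivWithinAt (c i) (dp i y) (Set.Icc y (xmax i)) y)
    (Ihat : Finset (Fin n))
    (hIhat : ∀ i, i ∈ Ihat ↔
      (d < xmax i ∧ ∀ y ∈ Set.Ioc (0 : ℝ) d, dp i y < (w i + c i y) / y))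
    (hne : Ihat.Nonempty)
    (ε : Fin n → ℝ)
    (hεpos : ∀ i ∈ Ihat, 0 < ε i)
    (hεcap : ∀ i ∈ Ihat, d + ε i ≤ xmax i)
    (hεavg : ∀ i ∈ Ihat, ∀ y ∈ Set.Ioc (0 : ℝ) (d + ε i), dp i y < (w i + c i y) / y)
    (π πh : ℝ → Fin n → ℝ)
    (hπ : ∀ p i, IsGreatest ((fun ux => p * ux.2 - Cost (w i) (c i) ux) ''
        Gen (xmax i)) (π p i))
    (hπh : ∀ p, ∀ i ∈ Ihat, IsGreatest ((fun ux => p * ux.2 - Cost (w i) (c i) ux) ''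
        Ghat (xmax i) (xcmax n xmax d i) (ε i)) (πh p i)) :
    ∀ p ∈ {p : ℝ | ∀ q, q * d - ∑ i ∈ Ihatᶜ, π q i - ∑ i ∈ Ihat, πh q i
        ≤ p * d - ∑ i ∈ Ihatᶜ, π p i - ∑ i ∈ Ihat, πh p i},
      (∀ i ∈ Ihat, p ≤ (w i + c i (d + ε i)) / (d + ε i))
      ∧ ∀ i ∈ Ihat, πh p i = 0 := by
  intro p hp
  -- Key: the average-cost bound: K_i * y ≤ w i + c i y for 0 < y ≤ d + ε i
  have key : ∀ i ∈ Ihat, ∀ y : ℝ, 0 < y → y ≤ d + ε i →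
      (w i + c i (d + ε i)) / (d + ε i) * y ≤ w i + c i y := by
    intro i hi y hy0 hyz
    have hεi := hεpos i hi
    set z := d + ε i with hz_def
    have hz0 : (0:ℝ) < z := by positivity
    have hzx : z ≤ xmax i := hεcap i hi
    set K := (w i + c i z) / z with hK_def
    have hKz : K * z = w i + c i z := div_mul_cancel₀ _ (ne_of_gt hz0)
    by_contra hlt
    push_neg at hlt
    set h : ℝ → ℝ := fun t => w i + c i t - K * t with hh
    have hhy : h y < 0 := by simp only [hh]; linarith
    have hcont' : ContinuousOn h (Set.Icc y z) := by
      have h1 : ContinuousOn (c i) (Set.Icc y z) :=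
        (hcont i).mono (Set.Icc_subset_Icc hy0.le hzx)
      exact (continuousOn_const.add h1).sub (continuousOn_const.mul continuousOn_id)
    have hf' : ∀ x ∈ Set.Ico y z, HasDerivWithinAt h (dp i x - K) (Set.Ici x) x := by
      intro x hx
      have hx0 : 0 < x := lt_of_lt_of_le hy0 hx.1
      have hxx : x < xmax i := lt_of_lt_of_le hx.2 hzx
      have h1 : HasDerivWithinAt (c i) (dp i x) (Set.Ici x) x := by
        refine (hdp i x hx0 hxx).mono_of_mem_nhdsWithin ?_
        rw [show Set.Icc x (xmax i) = Set.Ici x ∩ Set.Iic (xmax i) from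
          (Set.Ici_inter_Iic).symm]
        exact inter_mem_nhdsWithin _ (Iic_mem_nhds hxx)
      have h2 := (h1.const_add (w i)).sub ((hasDerivWithinAt_id x _).const_mul K)
      simpa [hh, mul_comm, Pi.sub_def] using h2
    have hB : ∀ x : ℝ, HasDerivAt (fun t => h y / y * t) (h y / y) x := by
      intro x
      simpa using (hasDerivAt_id x).const_mul (h y / y)
    have bound : ∀ x ∈ Set.Ico y z, h x = h y / y * x → dp i x - K < h y / y := by
      intro x hx hEq
      have hx0 : 0 < x := lt_of_lt_of_le hy0 hx.1
      have hdpx : dp i x < (w i + c i x) / x := hεavg i hi x ⟨hx0, hx.2.le⟩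
      have e1 : (w i + c i x) / x - K = h x / x := by
        simp only [hh]
        field_simp
      have e2 : h x / x = h y / y := by
        rw [hEq, mul_div_assoc, div_self (ne_of_gt hx0), mul_one]
      linarith [hdpx, e1, e2]
    have ha : h y ≤ h y / y * y := by
      rw [div_mul_cancel₀ _ (ne_of_gt hy0)]
    have main := image_le_of_deriv_right_lt_deriv_boundary hcont' hf' ha hB bound
    have hzc : h z ≤ h y / y * z := main (Set.right_mem_Icc.2 hyz)
    have hz_eq : h z = 0 := by simp only [hh]; linarith
    have hneg : h y / y * z < 0 :=
      mul_neg_of_neg_of_pos (div_neg_of_neg_of_pos hhy hy0) hz0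
    linarith
  -- πh q i = 0 whenever q ≤ K_i
  have πh0 : ∀ i ∈ Ihat, ∀ q : ℝ, q ≤ (w i + c i (d + ε i)) / (d + ε i) → πh q i = 0 := by
    intro i hi q hq
    have hgr := hπh q i hi
    have hd' : d < xmax i := ((hIhat i).1 hi).1
    have hεi := hεpos i hi
    have hxc : xcmax n xmax d i = d := min_eq_left hd'.le
    have hub : πh q i ≤ 0 := by
      obtain ⟨⟨⟨u, x⟩, ⟨⟨hu, hx0, hxu⟩, hxle⟩, hval⟩, _⟩ := hgr
      have hval' : q * x - (w i * u + c i x) = πh q i := hval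
      dsimp only at hu hx0 hxu hxle
      rw [← hval']
      rcases hu with hu | hu
      · subst hu
        have hx : x = 0 := le_antisymm (by simpa using hxu) hx0
        simp [hx, hc0 i]
      · subst hu
        rw [hxc] at hxle
        rcases eq_or_lt_of_le hx0 with hx0' | hx0'
        · rw [← hx0', hc0 i]
          have := hw i
          nlinarith
        · have h1 := key i hi x hx0' hxle
          have h2 : q * x ≤ (w i + c i (d + ε i)) / (d + ε i) * x :=
            mul_le_mul_of_nonneg_right hq hx0
          nlinarith
    have hlb : (0:ℝ) ≤ πh q i := by
      have h0 : (0:ℝ) ∈ (fun ux => q * ux.2 - Cost (w i) (c i) ux) ''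
          Ghat (xmax i) (xcmax n xmax d i) (ε i) := by
        refine ⟨((0:ℝ), (0:ℝ)), ⟨⟨Or.inl rfl, le_refl 0, by simp⟩, ?_⟩, ?_⟩
        · rw [hxc]; positivity
        · simp [Cost, hc0 i]
      exact hgr.2 h0
    linarith
  -- monotonicity of profits in the price
  have mono_π : ∀ i, ∀ q r : ℝ, q ≤ r → π q i ≤ π r i := by
    intro i q r hqr
    obtain ⟨⟨ux, hux, hval⟩, _⟩ := hπ q i
    have hval' : q * ux.2 - Cost (w i) (c i) ux = π q i := hval
    have hx0 : 0 ≤ ux.2 := hux.2.1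
    have h3 : r * ux.2 - Cost (w i) (c i) ux ≤ π r i := (hπ r i).2 ⟨ux, hux, rfl⟩
    have : q * ux.2 ≤ r * ux.2 := mul_le_mul_of_nonneg_right hqr hx0
    linarith
  have mono_πh : ∀ i ∈ Ihat, ∀ q r : ℝ, q ≤ r → πh q i ≤ πh r i := by
    intro i hi q r hqr
    obtain ⟨⟨ux, hux, hval⟩, _⟩ := hπh q i hi
    have hval' : q * ux.2 - Cost (w i) (c i) ux = πh q i := hval
    have hx0 : 0 ≤ ux.2 := hux.1.2.1
    have h3 : r * ux.2 - Cost (w i) (c i) ux ≤ πh r i := (hπh r i hi).2 ⟨ux, hux, rfl⟩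
    have : q * ux.2 ≤ r * ux.2 := mul_le_mul_of_nonneg_right hqr hx0
    linarith
  -- main bound on the price
  have main : ∀ i ∈ Ihat, p ≤ (w i + c i (d + ε i)) / (d + ε i) := by
    intro i0 hi0
    by_contra hgt
    push_neg at hgt
    set K := (w i0 + c i0 (d + ε i0)) / (d + ε i0) with hK_def
    have hεi : 0 < ε i0 := hεpos i0 hi0
    have hDP := hp K
    have hA : ∑ i ∈ Ihatᶜ, π K i ≤ ∑ i ∈ Ihatᶜ, π p i :=
      Finset.sum_le_sum fun i _ => mono_π i K p hgt.le
    have hsingle : πh p i0 - πh K i0 ≤ ∑ j ∈ Ihat, (πh p j - πh K j) :=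
      Finset.single_le_sum (fun j hj => sub_nonneg.2 (mono_πh j hj K p hgt.le)) hi0
    rw [Finset.sum_sub_distrib] at hsingle
    have hKi0 : πh K i0 = 0 := πh0 i0 hi0 K le_rfl
    have hlow : p * (d + ε i0) - (w i0 + c i0 (d + ε i0)) ≤ πh p i0 := by
      have hmem : ((1:ℝ), d + ε i0) ∈ Ghat (xmax i0) (xcmax n xmax d i0) (ε i0) := by
        refine ⟨⟨Or.inr rfl, by positivity, by simpa using hεcap i0 hi0⟩, ?_⟩
        have hxc0 : xcmax n xmax d i0 = d := min_eq_left ((hIhat i0).1 hi0).1.le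
        simp [hxc0]
      have h1 := (hπh p i0 hi0).2 ⟨(1, d + ε i0), hmem, rfl⟩
      simpa [Cost] using h1
    have hKd : K * (d + ε i0) = w i0 + c i0 (d + ε i0) :=
      div_mul_cancel₀ _ (by positivity)
    nlinarith [mul_pos (sub_pos.2 hgt) hεi]
  exact ⟨main, fun i hi => πh0 i hi p (main i hi)⟩
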